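/- For elements u, w of a Coxeter group W, if N(u) ⊆ N(w) then ℓ(w) = ℓ(u) + ℓ(u⁻¹w), i.e., u is a prefix of w in weak order. -/

import Mathlib

open scoped Classical

/-- A geometric representation (with based root system) of a Coxeter system `cs`
on a real vector space `V`, preserving a symmetric bilinear form `form`, with
simple roots `root i` satisfying the standard inner products
`B(α_i, α_j) = -cos (π / m i j)` (with value `≤ -1` when `m i j = ∞`, encoded `0`). -/
structure GeomRep {B : Type*} {W : Type*} [Group W] (M : CoxeterMatrix B)
    (cs : CoxeterSystem M W) (V : Type*) [AddCommGroup V] [Module ℝ V] where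
  form : LinearMap.BilinForm ℝ V
  form_symm : ∀ u v : V, form u v = form v u
  ρ : W →* (V ≃ₗ[ℝ] V)
  ρ_faithful : Function.Injective ρ
  root : B → V
  root_indep : LinearIndependent ℝ root
  form_preserved : ∀ (w : W) (u v : V), form (ρ w u) (ρ w v) = form u v
  form_root_finite : ∀ i j : B, M i j ≠ 0 →
    form (root i) (root j) = - Real.cos (Real.pi / (M i j : ℝ))
  form_root_infinite : ∀ i j : B, M i j = 0 → form (root i) (root j) ≤ -1
  simple_act : ∀ (i : B) (v : V),
    ρ (cs.simple i) v = v - (2 * form (root i) v) • root i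

namespace GeomRep

variable {B : Type*} {W : Type*} [Group W] {M : CoxeterMatrix B}
  {cs : CoxeterSystem M W} {V : Type*} [AddCommGroup V] [Module ℝ V]
  (G : GeomRep M cs V)

/-- The root system `Φ = W · Δ`. -/
def Roots : Set V := {v | ∃ (w : W) (i : B), v = G.ρ w (G.root i)}

/-- `v` is a nonnegative linear combination of simple roots. -/
def IsNonnegComb (v : V) : Prop :=
  ∃ c : B →₀ ℝ, (∀ i, 0 ≤ c i) ∧ v = c.sum fun i a => a • G.root i

/-- The set of positive roots `Φ⁺`. -/
def PosRoots : Set V := {v ∈ G.Roots | G.IsNonnegComb v}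

/-- The set of negative roots `Φ⁻ = -Φ⁺`. -/
def NegRoots : Set V := {v ∈ G.Roots | G.IsNonnegComb (-v)}

/-- The reflection in a root `α`, as a linear endomorphism of `V`. -/
def refl (α : V) : Module.End ℝ V :=
  LinearMap.id - (2 : ℝ) • LinearMap.smulRight (G.form α) α

/-- The (left) inversion set `N(w) = Φ⁺ ∩ w(Φ⁻)`. -/
def invSet (w : W) : Set V := {β ∈ G.PosRoots | G.ρ w⁻¹ β ∈ G.NegRoots}

/-- `β` dominates `α` : every `w` sending `β` negative sends `α` negative. -/
def Dominates (β α : V) : Prop := ∀ w : W, G.ρ w β ∈ G.NegRoots → G.ρ w α ∈ G.NegRoots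

/-- A small root: a positive root dominating no positive root other than itself. -/
def IsSmall (β : V) : Prop :=
  β ∈ G.PosRoots ∧ ∀ α ∈ G.PosRoots, G.Dominates β α → α = β

/-- The conical (nonnegative) hull of a set. -/
def cone (X : Set V) : Set V :=
  {v | ∃ c : V →₀ ℝ, (∀ x, 0 ≤ c x) ∧ ↑c.support ⊆ X ∧ v = c.sum fun x a => a • x}

/-- Low element: its inversion set is the biconvex closure of its small inversions. -/
def IsLow (Sm : Set V) (w : W) : Prop :=
  G.invSet w = cone (G.invSet w ∩ Sm) ∩ G.PosRoots

/-- The closed fundamental chamber. -/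
def chamber : Set V := {v | ∀ i : B, 0 ≤ G.form v (G.root i)}

/-- The Tits cone `T = ⋃_{w ∈ W} w(C̄)`. -/
def titsCone : Set V := ⋃ w : W, ⇑(G.ρ w) '' G.chamber

/-! ### Auxiliary development -/

section Aux

variable {B : Type*} {W : Type*} [Group W] {M : CoxeterMatrix B}
  {cs : CoxeterSystem M W} {V : Type*} [AddCommGroup V] [Module ℝ V]
  (G : GeomRep M cs V)

lemma rho_mul_apply (a b : W) (v : V) : G.ρ (a * b) v = G.ρ a (G.ρ b v) := by
  rw [map_mul]; rfl

@[simp] lemma rho_one_apply (v : V) : G.ρ 1 v = v := by rw [map_one]; rfl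

lemma form_root_self (i : B) : G.form (G.root i) (G.root i) = 1 := by
  have h := G.form_root_finite i i (by simp)
  rw [M.diagonal i] at h
  norm_num [Real.cos_pi] at h
  exact h

lemma rho_simple_root_self (i : B) : G.ρ (cs.simple i) (G.root i) = - G.root i := by
  rw [G.simple_act, G.form_root_self]
  module

lemma isNonnegComb_iff {v : V} : G.IsNonnegComb v ↔
    ∃ c : B →₀ ℝ, (∀ i, 0 ≤ c i) ∧ v = Finsupp.linearCombination ℝ G.root c := by
  unfold IsNonnegComb
  simp_rw [Finsupp.linearCombination_apply]

lemma isNonnegComb_root (i : B) : G.IsNonnegComb (G.root i) := by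
  rw [isNonnegComb_iff]
  refine ⟨Finsupp.single i 1, fun j => ?_, by simp⟩
  rw [Finsupp.single_apply]
  split <;> norm_num

lemma isNonnegComb_add {v w : V} (hv : G.IsNonnegComb v) (hw : G.IsNonnegComb w) :
    G.IsNonnegComb (v + w) := by
  rw [isNonnegComb_iff] at hv hw ⊢
  obtain ⟨c, hc, rfl⟩ := hv
  obtain ⟨d, hd, rfl⟩ := hw
  exact ⟨c + d, fun i => add_nonneg (hc i) (hd i), by rw [map_add]⟩

lemma isNonnegComb_smul {v : V} {a : ℝ} (ha : 0 ≤ a) (hv : G.IsNonnegComb v) :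
    G.IsNonnegComb (a • v) := by
  rw [isNonnegComb_iff] at hv ⊢
  obtain ⟨c, hc, rfl⟩ := hv
  exact ⟨a • c, fun i => by
    rw [Finsupp.smul_apply, smul_eq_mul]; exact mul_nonneg ha (hc i), by rw [map_smul]⟩

lemma eq_zero_of_isNonnegComb {v : V} (h1 : G.IsNonnegComb v) (h2 : G.IsNonnegComb (-v)) :
    v = 0 := by
  rw [isNonnegComb_iff] at h1 h2
  obtain ⟨c, hc, rfl⟩ := h1
  obtain ⟨d, hd, hd'⟩ := h2
  have hsum : Finsupp.linearCombination ℝ G.root (c + d) = 0 := by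
    rw [map_add, ← hd', add_neg_cancel]
  have hcd : c + d = 0 := linearIndependent_iff.mp G.root_indep _ hsum
  have hc0 : c = 0 := by
    ext i
    have h1 := hc i
    have h2 := hd i
    have h3 : c i + d i = 0 := by
      have := congrArg (fun f => f i) hcd
      simpa using this
    simp only [Finsupp.coe_zero, Pi.zero_apply]
    linarith
  rw [hc0, map_zero]

lemma root_mem_roots (i : B) : G.root i ∈ G.Roots := ⟨1, i, by simp⟩

lemma rho_mem_roots (w : W) {v : V} (h : v ∈ G.Roots) : G.ρ w v ∈ G.Roots := by
  obtain ⟨x, i, rfl⟩ := h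
  exact ⟨w * x, i, (G.rho_mul_apply w x _).symm⟩

lemma neg_mem_roots {v : V} (h : v ∈ G.Roots) : -v ∈ G.Roots := by
  obtain ⟨x, i, rfl⟩ := h
  refine ⟨x * cs.simple i, i, ?_⟩
  rw [G.rho_mul_apply, G.rho_simple_root_self, map_neg]

lemma zero_not_mem_roots : (0 : V) ∉ G.Roots := by
  rintro ⟨x, i, h⟩
  have : G.root i = 0 := by
    have := congrArg (G.ρ x⁻¹) h
    rw [← G.rho_mul_apply, inv_mul_cancel, G.rho_one_apply, map_zero] at this
    exact this.symm
  exact G.root_indep.ne_zero i this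

lemma neg_mem_negRoots_iff {v : V} : -v ∈ G.NegRoots ↔ v ∈ G.PosRoots := by
  unfold NegRoots PosRoots
  simp only [Set.mem_setOf_eq, neg_neg]
  constructor
  · rintro ⟨h1, h2⟩
    exact ⟨by simpa using G.neg_mem_roots h1, h2⟩
  · rintro ⟨h1, h2⟩
    exact ⟨G.neg_mem_roots h1, h2⟩

lemma not_mem_pos_and_neg {v : V} (h1 : v ∈ G.PosRoots) (h2 : v ∈ G.NegRoots) : False := by
  have hv : v = 0 := G.eq_zero_of_isNonnegComb h1.2 h2.2
  exact G.zero_not_mem_roots (hv ▸ h1.1)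

/-! ### Rank-two computations -/

lemma two_le_M {i j : B} (hij : i ≠ j) (hm : M i j ≠ 0) : 2 ≤ M i j := by
  have := M.off_diagonal i j hij
  omega

/-- Closed trigonometric formula for the action of alternating words on a simple root,
in the case `M i j ≠ 0`. -/
lemma rho_alt_finite (i j : B) (hij : i ≠ j) (hm : M i j ≠ 0) (n : ℕ) :
    G.ρ (cs.wordProd (CoxeterSystem.alternatingWord i j n)) (G.root i) =
      (Real.sin ((if Even n then (n : ℝ) + 1 else (n : ℝ)) * (Real.pi / (M i j : ℝ))) /
        Real.sin (Real.pi / (M i j : ℝ))) • G.root i +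
      (Real.sin ((if Even n then (n : ℝ) else (n : ℝ) + 1) * (Real.pi / (M i j : ℝ))) /
        Real.sin (Real.pi / (M i j : ℝ))) • G.root j := by
  have hm2 : 2 ≤ M i j := two_le_M hij hm
  have hmR : (2 : ℝ) ≤ (M i j : ℝ) := by exact_mod_cast hm2
  set θ : ℝ := Real.pi / (M i j : ℝ) with hθ
  have hθpos : 0 < θ := by
    apply div_pos Real.pi_pos; linarith
  have hθlt : θ < Real.pi := by
    rw [hθ, div_lt_iff₀ (by linarith)]
    nlinarith [Real.pi_pos]
  have hsin : Real.sin θ ≠ 0 := ne_of_gt (Real.sin_pos_of_pos_of_lt_pi hθpos hθlt)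
  have hcii : G.form (G.root i) (G.root i) = 1 := G.form_root_self i
  have hcjj : G.form (G.root j) (G.root j) = 1 := G.form_root_self j
  have hcij : G.form (G.root i) (G.root j) = - Real.cos θ := G.form_root_finite i j hm
  have hcji : G.form (G.root j) (G.root i) = - Real.cos θ := by
    rw [G.form_symm]; exact hcij
  induction n with
  | zero =>
      simp only [CoxeterSystem.alternatingWord, cs.wordProd_nil, G.rho_one_apply, Even.zero,
        if_true, Nat.cast_zero, zero_add, one_mul, zero_mul, Real.sin_zero, zero_div, zero_smul,
        add_zero, div_self hsin, one_smul]
  | succ n ih =>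
      rw [CoxeterSystem.alternatingWord_succ', cs.wordProd_cons, G.rho_mul_apply, ih]
      rcases Nat.even_or_odd n with hn | hn
      · have hn1 : ¬ Even (n + 1) := by simp [Nat.even_add_one, hn]
        simp only [hn, if_true, hn1, if_false]
        rw [G.simple_act j]
        rw [map_add, map_smul, map_smul, hcji, hcjj]
        have key : Real.sin (((n : ℝ) + 1 + 1) * θ) =
            2 * Real.cos θ * Real.sin (((n : ℝ) + 1) * θ) - Real.sin ((n : ℝ) * θ) := by
          have e1 : ((n : ℝ) + 1 + 1) * θ = ((n : ℝ) + 1) * θ + θ := by ring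
          have e2 : ((n : ℝ)) * θ = ((n : ℝ) + 1) * θ - θ := by ring
          rw [e1, e2, Real.sin_add, Real.sin_sub]; ring
        push_cast
        match_scalars
        · ring
        · field_simp
          rw [show θ * ((n:ℝ)+1+1) = ((n:ℝ)+1+1)*θ by ring, show θ * ((n:ℝ)+1) = ((n:ℝ)+1)*θ by ring, key]
          simp only [smul_eq_mul]; field_simp; ring
      · have hn' : ¬ Even n := Nat.not_even_iff_odd.mpr hn
        have hn1 : Even (n + 1) := Nat.even_add_one.mpr hn'
        simp only [hn', if_false, hn1, if_true]
        rw [G.simple_act i]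
        rw [map_add, map_smul, map_smul, hcii, hcij]
        have key : Real.sin (((n : ℝ) + 1 + 1) * θ) =
            2 * Real.cos θ * Real.sin (((n : ℝ) + 1) * θ) - Real.sin ((n : ℝ) * θ) := by
          have e1 : ((n : ℝ) + 1 + 1) * θ = ((n : ℝ) + 1) * θ + θ := by ring
          have e2 : ((n : ℝ)) * θ = ((n : ℝ) + 1) * θ - θ := by ring
          rw [e1, e2, Real.sin_add, Real.sin_sub]; ring
        push_cast
        match_scalars
        · field_simp
          rw [show θ * ((n:ℝ)+1+1) = ((n:ℝ)+1+1)*θ by ring, show θ * ((n:ℝ)+1) = ((n:ℝ)+1)*θ by ring, key]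
          simp only [smul_eq_mul]; field_simp; ring
        · ring

/-- In the case `M i j = 0`, the coefficients stay nonnegative (with a monotonicity invariant). -/
lemma rho_alt_infinite (i j : B) (hij : i ≠ j) (hm : M i j = 0) (n : ℕ) :
    ∃ a b : ℝ, 0 ≤ a ∧ 0 ≤ b ∧ (if Even n then b ≤ a else a ≤ b) ∧
      G.ρ (cs.wordProd (CoxeterSystem.alternatingWord i j n)) (G.root i) =
        a • G.root i + b • G.root j := by
  have hcii : G.form (G.root i) (G.root i) = 1 := G.form_root_self i
  have hcjj : G.form (G.root j) (G.root j) = 1 := G.form_root_self j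
  have hcij : G.form (G.root i) (G.root j) ≤ -1 := G.form_root_infinite i j hm
  have hcji : G.form (G.root j) (G.root i) ≤ -1 := by
    rw [G.form_symm]; exact hcij
  set c : ℝ := G.form (G.root i) (G.root j) with hc
  have hcji' : G.form (G.root j) (G.root i) = c := by rw [G.form_symm]
  induction n with
  | zero =>
      refine ⟨1, 0, by norm_num, le_refl 0, by norm_num, ?_⟩
      simp [CoxeterSystem.alternatingWord, cs.wordProd_nil]
  | succ n ih =>
      obtain ⟨a, b, ha, hb, hab, heq⟩ := ih
      rw [CoxeterSystem.alternatingWord_succ', cs.wordProd_cons, G.rho_mul_apply, heq]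
      rcases Nat.even_or_odd n with hn | hn
      · have hn1 : ¬ Even (n + 1) := by simp [Nat.even_add_one, hn]
        rw [if_pos hn] at hab
        refine ⟨a, -2 * c * a - b, ha, ?_, ?_, ?_⟩
        · nlinarith
        · rw [if_neg hn1]; nlinarith
        · rw [if_pos hn, G.simple_act j, map_add, map_smul, map_smul, hcji', hcjj]
          match_scalars <;> simp only [smul_eq_mul] <;> try ring
      · have hn' : ¬ Even n := Nat.not_even_iff_odd.mpr hn
        have hn1 : Even (n + 1) := Nat.even_add_one.mpr hn'
        rw [if_neg hn'] at hab
        refine ⟨-2 * c * b - a, b, ?_, hb, ?_, ?_⟩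
        · nlinarith
        · rw [if_pos hn1]; nlinarith
        · rw [if_neg hn', G.simple_act i, map_add, map_smul, map_smul, hcii, ← hc]
          match_scalars <;> simp only [smul_eq_mul] <;> try ring

/-- Combined rank-two positivity lemma. -/
lemma rho_alt_nonneg (i j : B) (hij : i ≠ j) (n : ℕ)
    (hn : M i j ≠ 0 → n + 1 ≤ M i j) :
    ∃ a b : ℝ, 0 ≤ a ∧ 0 ≤ b ∧
      G.ρ (cs.wordProd (CoxeterSystem.alternatingWord i j n)) (G.root i) =
        a • G.root i + b • G.root j := by
  by_cases hm : M i j = 0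
  · obtain ⟨a, b, ha, hb, _, heq⟩ := G.rho_alt_infinite i j hij hm n
    exact ⟨a, b, ha, hb, heq⟩
  · have hm2 : 2 ≤ M i j := two_le_M hij hm
    have hm2R : (2 : ℝ) ≤ (M i j : ℝ) := by exact_mod_cast hm2
    have hmR : (0 : ℝ) < (M i j : ℝ) := by linarith
    set θ : ℝ := Real.pi / (M i j : ℝ) with hθ
    have hθpos : 0 < θ := div_pos Real.pi_pos hmR
    have hn1 : (n : ℝ) + 1 ≤ (M i j : ℝ) := by exact_mod_cast hn hm
    have sin_nonneg' : ∀ k : ℝ, 0 ≤ k → k ≤ (M i j : ℝ) → 0 ≤ Real.sin (k * θ) := by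
      intro k hk0 hkm
      apply Real.sin_nonneg_of_nonneg_of_le_pi
      · positivity
      · have h1 : k * θ ≤ (M i j : ℝ) * θ := by nlinarith
        have h2 : (M i j : ℝ) * θ = Real.pi := by
          rw [hθ]; field_simp
        linarith
    have hsinθ : 0 < Real.sin θ := Real.sin_pos_of_pos_of_lt_pi hθpos (by
      rw [hθ, div_lt_iff₀ hmR]
      nlinarith [Real.pi_pos])
    rw [G.rho_alt_finite i j hij hm n]
    refine ⟨_, _, ?_, ?_, rfl⟩
    · apply div_nonneg _ (le_of_lt hsinθ)
      split
      · exact sin_nonneg' _ (by positivity) hn1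
      · exact sin_nonneg' _ (by positivity) (by linarith)
    · apply div_nonneg _ (le_of_lt hsinθ)
      split
      · exact sin_nonneg' _ (by positivity) (by linarith)
      · exact sin_nonneg' _ (by positivity) hn1

/-! ### Combinatorial lemmas -/

/-- A reduced word in two letters `i, j` such that right multiplication by `s i` increases
length must be the alternating word ending in `j`. -/
lemma word_eq_alternating {cs : CoxeterSystem M W} : ∀ (n : ℕ) (ω : List B) (i j : B),
    ω.length = n → (∀ k ∈ ω, k = i ∨ k = j) → cs.IsReduced ω →
    cs.length (cs.wordProd ω * cs.simple i) > cs.length (cs.wordProd ω) →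
    ω = CoxeterSystem.alternatingWord i j n := by
  intro n
  induction n with
  | zero =>
      intro ω i j hlen _ _ _
      rw [List.length_eq_zero_iff] at hlen
      simp [hlen, CoxeterSystem.alternatingWord]
  | succ n ih =>
      intro ω i j hlen hmem hred hgt
      obtain ⟨σ, k, rfl⟩ : ∃ (σ : List B) (k : B), ω = σ.concat k := by
        rcases List.eq_nil_or_concat ω with h | ⟨σ, k, h⟩
        · rw [h] at hlen; simp at hlen
        · exact ⟨σ, k, h⟩
      have hσlen : σ.length = n := by
        rw [List.length_concat] at hlen; omega
      have hσred : cs.IsReduced σ := by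
        unfold CoxeterSystem.IsReduced at hred ⊢
        have h1 : cs.length (cs.wordProd σ) ≤ σ.length := cs.length_wordProd_le σ
        have h2 : cs.length (cs.wordProd (σ.concat k)) ≤ cs.length (cs.wordProd σ) + 1 := by
          rw [cs.wordProd_concat]
          have := cs.length_mul_le (cs.wordProd σ) (cs.simple k)
          rw [cs.length_simple] at this
          exact this
        rw [List.length_concat] at hred
        omega
      have hred' : cs.length (cs.wordProd (σ.concat k)) = n + 1 := by
        unfold CoxeterSystem.IsReduced at hred
        rw [hred, List.length_concat, hσlen]
      have hσred' : cs.length (cs.wordProd σ) = n := by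
        unfold CoxeterSystem.IsReduced at hσred
        rw [hσred, hσlen]
      have hk : k = j := by
        rcases hmem k (by simp) with hk | hk
        · exfalso
          have e1 : cs.length (cs.wordProd (σ.concat k) * cs.simple i) =
              cs.length (cs.wordProd σ) := by
            rw [cs.wordProd_concat, hk, mul_assoc, cs.simple_mul_simple_self, mul_one]
          rw [e1, hσred', hred'] at hgt
          omega
        · exact hk
      have hgt2 : cs.length (cs.wordProd σ * cs.simple j) > cs.length (cs.wordProd σ) := by
        have e : cs.wordProd σ * cs.simple j = cs.wordProd (σ.concat k) := by
          rw [cs.wordProd_concat, hk]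
        rw [e, hσred', hred']
        omega
      have hmem2 : ∀ l ∈ σ, l = j ∨ l = i := by
        intro l hl
        rcases hmem l (by simp [hl]) with h | h
        · right; exact h
        · left; exact h
      have hσ : σ = CoxeterSystem.alternatingWord j i n := ih σ j i hσlen hmem2 hσred hgt2
      rw [hσ, hk]
      exact (CoxeterSystem.alternatingWord_succ i j n).symm

/-- Descending by `s i`, `s j` from the right. -/
lemma descend {cs : CoxeterSystem M W} (i j : B) : ∀ (w : W),
    ∃ (u : W) (ω : List B), (∀ k ∈ ω, k = i ∨ k = j) ∧ w = u * cs.wordProd ω ∧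
      cs.length w = cs.length u + ω.length ∧
      ¬ cs.IsRightDescent u i ∧ ¬ cs.IsRightDescent u j := by
  suffices key : ∀ (n : ℕ) (w : W), cs.length w ≤ n →
      ∃ (u : W) (ω : List B), (∀ k ∈ ω, k = i ∨ k = j) ∧ w = u * cs.wordProd ω ∧
        cs.length w = cs.length u + ω.length ∧
        ¬ cs.IsRightDescent u i ∧ ¬ cs.IsRightDescent u j by
    exact fun w => key (cs.length w) w le_rfl
  intro n
  induction n using Nat.strong_induction_on with
  | _ n ihn =>
  intro w hwn
  by_cases hi : cs.IsRightDescent w i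
  · have hlt : cs.length (w * cs.simple i) < n := lt_of_lt_of_le hi hwn
    obtain ⟨u, ω, hmem, hw, hlen, hui, huj⟩ := ihn _ hlt (w * cs.simple i) le_rfl
    refine ⟨u, ω.concat i, ?_, ?_, ?_, hui, huj⟩
    · intro k hk
      simp only [List.concat_eq_append, List.mem_append, List.mem_singleton] at hk
      rcases hk with h | h
      · exact hmem k h
      · left; exact h
    · rw [cs.wordProd_concat, ← mul_assoc, ← hw]
      rw [mul_assoc, cs.simple_mul_simple_self, mul_one]
    · rw [List.length_concat]
      have hi' : cs.length (w * cs.simple i) < cs.length w := hi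
      rcases cs.length_mul_simple w i with h | h
      · omega
      · omega
  · by_cases hj : cs.IsRightDescent w j
    · have hlt : cs.length (w * cs.simple j) < n := lt_of_lt_of_le hj hwn
      obtain ⟨u, ω, hmem, hw, hlen, hui, huj⟩ := ihn _ hlt (w * cs.simple j) le_rfl
      refine ⟨u, ω.concat j, ?_, ?_, ?_, hui, huj⟩
      · intro k hk
        simp only [List.concat_eq_append, List.mem_append, List.mem_singleton] at hk
        rcases hk with h | h
        · exact hmem k h
        · right; exact h
      · rw [cs.wordProd_concat, ← mul_assoc, ← hw]
        rw [mul_assoc, cs.simple_mul_simple_self, mul_one]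
      · rw [List.length_concat]
        have hj' : cs.length (w * cs.simple j) < cs.length w := hj
        rcases cs.length_mul_simple w j with h | h
        · omega
        · omega
    · exact ⟨w, [], by simp, by simp [cs.wordProd_nil], by simp [cs.wordProd_nil], hi, hj⟩

/-! ### The key positivity theorem -/

theorem pos_of_not_rightDescent : ∀ (w : W) (i : B), ¬ cs.IsRightDescent w i →
    G.ρ w (G.root i) ∈ G.PosRoots := by
  suffices key : ∀ (n : ℕ) (w : W), cs.length w ≤ n → ∀ (i : B), ¬ cs.IsRightDescent w i →
      G.ρ w (G.root i) ∈ G.PosRoots by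
    exact fun w i hi => key (cs.length w) w le_rfl i hi
  intro n
  induction n using Nat.strong_induction_on with
  | _ n ihn =>
  intro w hwn i hi
  by_cases hw1 : w = 1
  · subst hw1
    rw [G.rho_one_apply]
    exact ⟨G.root_mem_roots i, G.isNonnegComb_root i⟩
  · obtain ⟨j, hj⟩ := cs.exists_rightDescent_of_ne_one hw1
    have hij : i ≠ j := by
      rintro rfl; exact hi hj
    obtain ⟨u, ω, hmem, hw, hlen, hui, huj⟩ := descend (cs := cs) i j w
    set x := cs.wordProd ω with hx
    have hxred : cs.IsReduced ω := by
      unfold CoxeterSystem.IsReduced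
      have h1 : cs.length x ≤ ω.length := cs.length_wordProd_le ω
      have h2 : cs.length w ≤ cs.length u + cs.length x := by
        rw [hw]; exact cs.length_mul_le u x
      rw [← hx]
      omega
    have hxlen : cs.length x = ω.length := hxred
    have hn1 : 1 ≤ ω.length := by
      rcases Nat.eq_zero_or_pos ω.length with h0 | h1
      · exfalso
        rw [List.length_eq_zero_iff] at h0
        have hx1 : x = 1 := by rw [hx, h0, cs.wordProd_nil]
        rw [hx1, mul_one] at hw
        rw [hw] at hj
        exact huj hj
      · exact h1
    have hulen : cs.length u < cs.length w := by omega
    have hxsi : cs.length (x * cs.simple i) > cs.length x := by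
      by_contra hcon
      push_neg at hcon
      have hne := cs.length_mul_simple_ne x i
      have h1 : cs.length (x * cs.simple i) < cs.length x := lt_of_le_of_ne hcon hne
      have h2 : cs.length (w * cs.simple i) ≤ cs.length u + cs.length (x * cs.simple i) := by
        rw [hw, mul_assoc]; exact cs.length_mul_le u (x * cs.simple i)
      have h3 : cs.length w < cs.length (w * cs.simple i) := by
        have hne2 := cs.length_mul_simple_ne w i
        have : ¬ cs.length (w * cs.simple i) < cs.length w := hi
        omega
      omega
    have hωalt : ω = CoxeterSystem.alternatingWord i j ω.length :=
      word_eq_alternating ω.length ω i j rfl hmem hxred hxsi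
    -- bound on the length when M i j is finite
    have hbound : M i j ≠ 0 → ω.length + 1 ≤ M i j := by
      intro hm
      by_contra hcon
      push_neg at hcon
      have hMji : M j i ≠ 0 := by rwa [M.symmetric j i]
      have h1 : ¬ cs.IsReduced (CoxeterSystem.alternatingWord j i (ω.length + 1)) :=
        cs.not_isReduced_alternatingWord j i hMji (by rw [M.symmetric j i]; omega)
      apply h1
      have h2 : (CoxeterSystem.alternatingWord j i (ω.length + 1)) = ω.concat i := by
        rw [CoxeterSystem.alternatingWord_succ, ← hωalt]
      rw [h2]
      unfold CoxeterSystem.IsReduced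
      rw [cs.wordProd_concat, List.length_concat, ← hx]
      have hne := cs.length_mul_simple_ne x i
      rcases cs.length_mul_simple x i with h | h
      · omega
      · omega
    obtain ⟨a, b, ha, hb, heq⟩ := G.rho_alt_nonneg i j hij ω.length hbound
    rw [← hωalt] at heq
    have hmain : G.ρ w (G.root i) = a • G.ρ u (G.root i) + b • G.ρ u (G.root j) := by
      rw [hw, G.rho_mul_apply, hx, heq, map_add, map_smul, map_smul]
    have hulen' : cs.length u < n := lt_of_lt_of_le hulen hwn
    have hpi : G.ρ u (G.root i) ∈ G.PosRoots := ihn _ hulen' u le_rfl i hui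
    have hpj : G.ρ u (G.root j) ∈ G.PosRoots := ihn _ hulen' u le_rfl j huj
    constructor
    · exact ⟨w, i, rfl⟩
    · rw [hmain]
      exact G.isNonnegComb_add (G.isNonnegComb_smul ha hpi.2) (G.isNonnegComb_smul hb hpj.2)

theorem rightDescent_iff_neg (w : W) (i : B) :
    cs.IsRightDescent w i ↔ G.ρ w (G.root i) ∈ G.NegRoots := by
  constructor
  · intro h
    have h2 : ¬ cs.IsRightDescent (w * cs.simple i) i := by
      unfold CoxeterSystem.IsRightDescent at h ⊢
      rw [mul_assoc, cs.simple_mul_simple_self, mul_one]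
      omega
    have hpos := G.pos_of_not_rightDescent (w * cs.simple i) i h2
    have : G.ρ w (G.root i) = - G.ρ (w * cs.simple i) (G.root i) := by
      rw [G.rho_mul_apply, G.rho_simple_root_self, map_neg, neg_neg]
    rw [this]
    rw [← neg_mem_negRoots_iff] at hpos
    simpa using hpos
  · intro h
    by_contra hcon
    exact G.not_mem_pos_and_neg (G.pos_of_not_rightDescent w i hcon) h

lemma roots_pos_or_neg {v : V} (h : v ∈ G.Roots) : v ∈ G.PosRoots ∨ v ∈ G.NegRoots := by
  obtain ⟨w, i, rfl⟩ := h
  by_cases hd : cs.IsRightDescent w i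
  · right; exact (G.rightDescent_iff_neg w i).mp hd
  · left; exact G.pos_of_not_rightDescent w i hd

/-- `s i` permutes the positive roots other than `root i`. -/
lemma simple_perm_pos {i : B} {β : V} (hβ : β ∈ G.PosRoots) (hne : β ≠ G.root i) :
    G.ρ (cs.simple i) β ∈ G.PosRoots := by
  have hroot : G.ρ (cs.simple i) β ∈ G.Roots := G.rho_mem_roots _ hβ.1
  rcases G.roots_pos_or_neg hroot with h | h
  · exact h
  · exfalso
    -- β is a nonneg comb c, -(s i β) is a nonneg comb d
    obtain ⟨c, hc, hcβ⟩ := (G.isNonnegComb_iff).mp hβ.2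
    obtain ⟨d, hd, hdβ⟩ := (G.isNonnegComb_iff).mp h.2
    have hact : G.ρ (cs.simple i) β = β - (2 * G.form (G.root i) β) • G.root i := G.simple_act i β
    set t : ℝ := 2 * G.form (G.root i) β with ht
    have hzero : Finsupp.linearCombination ℝ G.root (c + d - t • Finsupp.single i 1) = 0 := by
      have h2 : Finsupp.linearCombination ℝ G.root d = -(β - t • G.root i) := by
        rw [← hdβ, hact]
      rw [map_sub, map_add, map_smul, Finsupp.linearCombination_single, one_smul,
        ← hcβ, h2]
      abel
    have hcd : c + d - t • Finsupp.single i 1 = 0 :=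
      linearIndependent_iff.mp G.root_indep _ hzero
    have hck : ∀ k, k ≠ i → c k = 0 := by
      intro k hk
      have := congrArg (fun f => f k) hcd
      simp only [Finsupp.coe_sub, Finsupp.coe_add, Pi.sub_apply, Pi.add_apply,
        Finsupp.coe_zero, Pi.zero_apply, Finsupp.coe_smul, Pi.smul_apply,
        Finsupp.single_apply, if_neg (Ne.symm hk), smul_eq_mul, mul_zero, sub_zero] at this
      have h1 := hc k
      have h2 := hd k
      linarith
    have hcsingle : c = Finsupp.single i (c i) := by
      ext k
      by_cases hk : k = i
      · subst hk; simp
      · rw [Finsupp.single_apply, if_neg (Ne.symm hk)]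
        exact hck k hk
    have hβeq : β = (c i) • G.root i := by
      conv_lhs => rw [hcβ, hcsingle]
      simp [Finsupp.linearCombination_single]
    -- the form of a root with itself is 1
    have hnorm : G.form β β = 1 := by
      obtain ⟨x, l, hxl⟩ := hβ.1
      rw [hxl, G.form_preserved, G.form_root_self]
    rw [hβeq] at hnorm
    simp only [map_smul, LinearMap.smul_apply, smul_eq_mul, G.form_root_self] at hnorm
    have hci : c i = 1 := by nlinarith [hc i]
    apply hne
    rw [hβeq, hci, one_smul]

/-! ### Inversion sets and simple roots -/

lemma simple_mem_invSet_iff (u : W) (i : B) :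
    G.root i ∈ G.invSet u ↔ cs.IsLeftDescent u i := by
  unfold GeomRep.invSet
  simp only [Set.mem_setOf_eq]
  constructor
  · rintro ⟨-, h2⟩
    exact (cs.isRightDescent_inv_iff).mp ((G.rightDescent_iff_neg u⁻¹ i).mpr h2)
  · intro h
    refine ⟨⟨G.root_mem_roots i, G.isNonnegComb_root i⟩, ?_⟩
    exact (G.rightDescent_iff_neg u⁻¹ i).mp ((cs.isRightDescent_inv_iff).mpr h)

lemma invSet_step {u w : W} {i : B} (hu : cs.IsLeftDescent u i) (hw : cs.IsLeftDescent w i)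
    (h : G.invSet u ⊆ G.invSet w) :
    G.invSet (cs.simple i * u) ⊆ G.invSet (cs.simple i * w) := by
  intro β hβ
  obtain ⟨hβpos, hβneg⟩ := hβ
  have hinv : (cs.simple i * u)⁻¹ = u⁻¹ * cs.simple i := by
    rw [mul_inv_rev, cs.inv_simple]
  rw [hinv, G.rho_mul_apply] at hβneg
  have hβne : β ≠ G.root i := by
    rintro rfl
    rw [G.rho_simple_root_self, map_neg] at hβneg
    rw [neg_mem_negRoots_iff] at hβneg
    have hneg : G.ρ u⁻¹ (G.root i) ∈ G.NegRoots :=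
      (G.rightDescent_iff_neg u⁻¹ i).mp ((cs.isRightDescent_inv_iff).mpr hu)
    exact G.not_mem_pos_and_neg hβneg hneg
  have hγpos : G.ρ (cs.simple i) β ∈ G.PosRoots := G.simple_perm_pos hβpos hβne
  have hγmem : G.ρ (cs.simple i) β ∈ G.invSet u := ⟨hγpos, hβneg⟩
  have hγw : G.ρ (cs.simple i) β ∈ G.invSet w := h hγmem
  refine ⟨hβpos, ?_⟩
  have hinv2 : (cs.simple i * w)⁻¹ = w⁻¹ * cs.simple i := by
    rw [mul_inv_rev, cs.inv_simple]
  rw [hinv2, G.rho_mul_apply]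
  exact hγw.2

end Aux

end GeomRep

/-- If `N(u) ⊆ N(w)` then `ℓ(w) = ℓ(u) + ℓ(u⁻¹w)`. -/
theorem invSet_subset_imp_prefix {B : Type*} {W : Type*} [Group W] {M : CoxeterMatrix B}
    (cs : CoxeterSystem M W) {V : Type*} [AddCommGroup V] [Module ℝ V]
    (G : GeomRep M cs V) (u w : W) (h : G.invSet u ⊆ G.invSet w) :
    cs.length w = cs.length u + cs.length (u⁻¹ * w) := by
  suffices key : ∀ (n : ℕ) (u w : W), cs.length u ≤ n → G.invSet u ⊆ G.invSet w →
      cs.length w = cs.length u + cs.length (u⁻¹ * w) by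
    exact key (cs.length u) u w le_rfl h
  clear h u w
  intro n
  induction n using Nat.strong_induction_on with
  | _ n ihn =>
  intro u w hun h
  by_cases hu1 : u = 1
  · subst hu1
    simp
  · obtain ⟨i, hi⟩ := cs.exists_leftDescent_of_ne_one hu1
    have hαu : G.root i ∈ G.invSet u := (G.simple_mem_invSet_iff u i).mpr hi
    have hαw : G.root i ∈ G.invSet w := h hαu
    have hwi : cs.IsLeftDescent w i := (G.simple_mem_invSet_iff w i).mp hαw
    have hstep := G.invSet_step hi hwi h
    have hulen : cs.length (cs.simple i * u) < cs.length u := hi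
    have hulen' : cs.length (cs.simple i * u) < n := lt_of_lt_of_le hulen hun
    have hrec := ihn _ hulen' (cs.simple i * u) (cs.simple i * w) le_rfl hstep
    have hinv : (cs.simple i * u)⁻¹ * (cs.simple i * w) = u⁻¹ * w := by
      rw [mul_inv_rev, cs.inv_simple, mul_assoc, ← mul_assoc (cs.simple i),
        cs.simple_mul_simple_self, one_mul]
    rw [hinv] at hrec
    have hu2 : cs.length u = cs.length (cs.simple i * u) + 1 := by
      rcases cs.length_simple_mul u i with h' | h'
      · omega
      · omega
    have hw2 : cs.length w = cs.length (cs.simple i * w) + 1 := by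
      have hwlen : cs.length (cs.simple i * w) < cs.length w := hwi
      rcases cs.length_simple_mul w i with h' | h'
      · omega
      · omega
    omega
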